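/- Let n ≥ 2, let P = {p, a₁, …, a_{n−1}}, and let K = {(a_{i+1}, a_i) : 1 ≤ i ≤ n−2} be the directed path of known dependencies among the a_i. Let T be a family of subsets of P with the following property: for every two repositories on P having this K, U = ∅, B = ∅, and at most one conflict (|C| ≤ 1) each, if every query in T receives identical feedback under both repositories then the two repositories have the same conflict set C. Then |T| ≥ n − 1. -/

import Mathlib

/-- A software repository on package set `Fin n`: known dependencies `K`,
unknown dependencies `U`, conflicts `C` (unordered pairs of distinct packages),
and broken packages `B`. -/
structure Repo (n : ℕ) where
  K : Finset (Fin n × Fin n)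
  U : Finset (Fin n × Fin n)
  C : Finset (Sym2 (Fin n))
  B : Finset (Fin n)
  hC : ∀ s ∈ C, ¬ s.IsDiag

/-- An installation `I` is successful if it avoids broken packages, is closed
under all (known and unknown) dependencies, and contains no conflicting pair. -/
def Successful {n : ℕ} (R : Repo n) (I : Finset (Fin n)) : Prop :=
  Disjoint I R.B ∧
  (∀ e ∈ R.K ∪ R.U, e.1 ∈ I → e.2 ∈ I) ∧
  (∀ s ∈ R.C, ¬ ∀ x ∈ s, x ∈ I)

/-- A package is defective if no successful installation contains it. -/
def Defective {n : ℕ} (R : Repo n) (p : Fin n) : Prop :=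
  ∀ I : Finset (Fin n), Successful R I → p ∉ I

/-- The set of defective packages. -/
def DefSet {n : ℕ} (R : Repo n) : Set (Fin n) := {p | Defective R p}

/-- Two packages weakly conflict if no successful installation contains both. -/
def WeakConflict {n : ℕ} (R : Repo n) (p q : Fin n) : Prop :=
  ∀ I : Finset (Fin n), Successful R I → ¬ (p ∈ I ∧ q ∈ I)

/-- `p` weakly depends on `q` if every successful installation containing `p`
also contains `q`. -/
def WeakDep {n : ℕ} (R : Repo n) (p q : Fin n) : Prop :=
  ∀ I : Finset (Fin n), Successful R I → p ∈ I → q ∈ I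

/-- The weakly-conflicting pairs of non-defective packages (each unordered pair
counted once via `<`). -/
def WeakConflictPairs {n : ℕ} (R : Repo n) : Set (Fin n × Fin n) :=
  {pq | pq.1 < pq.2 ∧ ¬ Defective R pq.1 ∧ ¬ Defective R pq.2 ∧
    WeakConflict R pq.1 pq.2}

/-- `(n,a,b)`-cover-free family. -/
def IsCFF (n a b : ℕ) (T : Finset (Finset (Fin n))) : Prop :=
  ∀ S₁ S₂ : Finset (Fin n), Disjoint S₁ S₂ → S₁.card = a → S₂.card = b →
    ∃ v ∈ T, Disjoint v S₁ ∧ S₂ ⊆ v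

/-- The `(≤a, ≤b)`-covering property. -/
def CoveringLE (n a b : ℕ) (F : Finset (Finset (Fin n))) : Prop :=
  ∀ S₁ S₂ : Finset (Fin n), Disjoint S₁ S₂ → S₁.card ≤ a →
    1 ≤ S₂.card → S₂.card ≤ b → ∃ v ∈ F, Disjoint v S₁ ∧ S₂ ⊆ v

/-- The digraph of known dependencies is acyclic. -/
def Acyclic {n : ℕ} (K : Finset (Fin n × Fin n)) : Prop :=
  ∀ p : Fin n, ¬ Relation.TransGen (fun x y => (x, y) ∈ K) p p

open Classical in
/-- The `K`-closure of `v`: everything reachable from `v` along `K`-edges. -/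
noncomputable def kclosure {n : ℕ} (K : Finset (Fin n × Fin n))
    (v : Finset (Fin n)) : Finset (Fin n) :=
  Finset.univ.filter
    (fun p => ∃ q ∈ v, Relation.ReflTransGen (fun x y => (x, y) ∈ K) q p)

/-- `Sset R T p`: the queries of `T` that are successful installations
containing `p`. -/
def Sset {n : ℕ} (R : Repo n) (T : Finset (Finset (Fin n))) (p : Fin n) :
    Set (Finset (Fin n)) :=
  {t | t ∈ T ∧ Successful R t ∧ p ∈ t}


/-- The directed path of known dependencies among `a₁, …, a_{n-1}`
(package `0` is `p`; edges `(j+1, j)` for `j ≥ 1`). -/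
def KpathTail (n : ℕ) : Finset (Fin n × Fin n) :=
  Finset.univ.filter (fun e => (e.1 : ℕ) = (e.2 : ℕ) + 1 ∧ 1 ≤ (e.2 : ℕ))

def Cl {n : ℕ} (t : Finset (Fin n)) : Prop :=
  ∀ e ∈ KpathTail n, e.1 ∈ t → e.2 ∈ t

lemma cl_step {n : ℕ} {t : Finset (Fin n)} (h : Cl t) {a : ℕ} (ha : 1 ≤ a)
    (hx : a + 1 ∈ t.image Fin.val) : a ∈ t.image Fin.val := by
  simp only [Finset.mem_image] at hx ⊢
  obtain ⟨x, hxt, hxv⟩ := hx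
  have han : a < n := by have := x.isLt; omega
  refine ⟨⟨a, han⟩, ?_, rfl⟩
  exact h (x, ⟨a, han⟩) (by simp [KpathTail, hxv, ha]) hxt

lemma cl_down {n : ℕ} {t : Finset (Fin n)} (h : Cl t) {a b : ℕ} (ha : 1 ≤ a)
    (hab : a ≤ b) (hb : b ∈ t.image Fin.val) : a ∈ t.image Fin.val := by
  induction b, hab using Nat.le_induction with
  | base => exact hb
  | succ b hb' ih => exact ih (cl_step h (le_trans ha hb') hb)

def RepoC {n : ℕ} (C : Finset (Sym2 (Fin n))) (hC : ∀ s ∈ C, ¬ s.IsDiag) :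
    Repo n := ⟨KpathTail n, ∅, C, ∅, hC⟩

lemma succ_empty {n : ℕ} (t : Finset (Fin n)) :
    Successful (RepoC ∅ (by simp)) t ↔ Cl t := by
  simp [Successful, RepoC, Cl]

lemma succ_one {n : ℕ} {z i : Fin n} (hzi : z ≠ i) (t : Finset (Fin n)) :
    Successful (RepoC {s(z, i)} (by simp [hzi])) t ↔
      Cl t ∧ ¬ (z ∈ t ∧ i ∈ t) := by
  simp only [Successful, RepoC, Finset.disjoint_empty_right, Finset.union_empty,
    Finset.mem_singleton, true_and, forall_eq, Cl]
  constructor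
  · rintro ⟨h1, h2⟩
    exact ⟨h1, fun ⟨hz, hi⟩ => h2 (fun x hx => by
      rcases Sym2.mem_iff.mp hx with h | h <;> simp [h, hz, hi])⟩
  · rintro ⟨h1, h2⟩
    exact ⟨h1, fun h => h2 ⟨h z (by simp), h i (by simp)⟩⟩


theorem conflict_learning_linear_lower_bound (n : ℕ) (hn : 2 ≤ n)
    (T : Finset (Finset (Fin n)))
    (hT : ∀ R₁ R₂ : Repo n,
      R₁.K = KpathTail n → R₂.K = KpathTail n →
      R₁.U = ∅ → R₂.U = ∅ →
      R₁.B = ∅ → R₂.B = ∅ →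
      R₁.C.card ≤ 1 → R₂.C.card ≤ 1 →
      (∀ t ∈ T, Successful R₁ t ↔ Successful R₂ t) →
      R₁.C = R₂.C) :
    n - 1 ≤ T.card := by
  classical
  set z : Fin n := ⟨0, by omega⟩ with hz
  -- key step: for each 1 ≤ i ≤ n-1 there is a query whose value-image
  -- contains i but not i+1
  have key : ∀ i : ℕ, 1 ≤ i → i ≤ n - 1 →
      ∃ t ∈ T, Cl t ∧ i ∈ t.image Fin.val ∧ (i + 1) ∉ t.image Fin.val := by
    intro i h1 h2
    have hin : i < n := by omega
    set fi : Fin n := ⟨i, hin⟩ with hfi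
    have hzfi : z ≠ fi := by simp [hz, hfi, Fin.ext_iff]; omega
    by_cases hlast : i = n - 1
    · -- compare the one-conflict repo with the empty repo
      have hC1 : ∀ s ∈ ({s(z, fi)} : Finset (Sym2 (Fin n))), ¬ s.IsDiag := by
        simp [hzfi]
      have hne : (RepoC {s(z, fi)} hC1).C ≠ (RepoC (∅ : Finset (Sym2 (Fin n))) (by simp)).C := by
        simp [RepoC]
      have := mt (hT (RepoC {s(z, fi)} hC1) (RepoC ∅ (by simp))
        rfl rfl rfl rfl rfl rfl (by simp [RepoC]) (by simp [RepoC])) hne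
      push_neg at this
      obtain ⟨t, htT, hiff⟩ := this
      rw [succ_one hzfi, succ_empty] at hiff
      have h3 : Cl t ∧ z ∈ t ∧ fi ∈ t := by tauto
      refine ⟨t, htT, h3.1, Finset.mem_image.mpr ⟨fi, h3.2.2, rfl⟩, ?_⟩
      simp only [Finset.mem_image, not_exists]
      rintro x ⟨hx, hv⟩
      have := x.isLt; omega
    · -- compare the repos with conflicts {z, i} and {z, i+1}
      have hi1n : i + 1 < n := by omega
      set fj : Fin n := ⟨i + 1, hi1n⟩ with hfj
      have hzfj : z ≠ fj := by simp [hz, hfj, Fin.ext_iff]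
      have hC1 : ∀ s ∈ ({s(z, fi)} : Finset (Sym2 (Fin n))), ¬ s.IsDiag := by
        simp [hzfi]
      have hC2 : ∀ s ∈ ({s(z, fj)} : Finset (Sym2 (Fin n))), ¬ s.IsDiag := by
        simp [hzfj]
      have hfifj : fi ≠ fj := by simp [hfi, hfj, Fin.ext_iff]
      have hne : (RepoC {s(z, fi)} hC1).C ≠ (RepoC {s(z, fj)} hC2).C := by
        simp only [RepoC, ne_eq, Finset.singleton_inj]
        intro h
        rcases Sym2.eq_iff.mp h with ⟨_, h2⟩ | ⟨h2, _⟩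
        · exact hfifj h2
        · exact hzfj h2
      have := mt (hT (RepoC {s(z, fi)} hC1) (RepoC {s(z, fj)} hC2)
        rfl rfl rfl rfl rfl rfl (by simp [RepoC]) (by simp [RepoC])) hne
      push_neg at this
      obtain ⟨t, htT, hiff⟩ := this
      rw [succ_one hzfi, succ_one hzfj] at hiff
      have hcl : Cl t := by tauto
      -- downward closure: fj ∈ t → fi ∈ t
      have hdown : fj ∈ t → fi ∈ t := by
        intro hjt
        have : i ∈ t.image Fin.val :=
          cl_down hcl h1 (Nat.le_succ i) (Finset.mem_image.mpr ⟨fj, hjt, rfl⟩)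
        obtain ⟨x, hx, hv⟩ := Finset.mem_image.mp this
        have hxe : x = fi := Fin.ext (show x.val = (fi : Fin n).val from hv)
        exact hxe ▸ hx
      have h3 : z ∈ t ∧ fi ∈ t ∧ fj ∉ t := by tauto
      refine ⟨t, htT, hcl, Finset.mem_image.mpr ⟨fi, h3.2.1, rfl⟩, ?_⟩
      simp only [Finset.mem_image, not_exists]
      rintro x ⟨hx, hv⟩
      exact h3.2.2 ((Fin.ext (show x.val = (fj : Fin n).val from hv)) ▸ hx)
  -- choose witnesses and count
  have key' : ∀ i : ℕ, ∃ t : Finset (Fin n),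
      1 ≤ i → i ≤ n - 1 → t ∈ T ∧ Cl t ∧ i ∈ t.image Fin.val ∧
        (i + 1) ∉ t.image Fin.val := by
    intro i
    by_cases h : 1 ≤ i ∧ i ≤ n - 1
    · obtain ⟨t, ht⟩ := key i h.1 h.2
      exact ⟨t, fun _ _ => ht⟩
    · exact ⟨∅, fun h1 h2 => absurd ⟨h1, h2⟩ h⟩
  choose f hf using key'
  have hcard : (Finset.Icc 1 (n - 1)).card = n - 1 := by
    rw [Nat.card_Icc]; omega
  rw [← hcard]
  apply Finset.card_le_card_of_injOn f
  · intro i hi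
    rw [Finset.mem_coe, Finset.mem_Icc] at hi
    exact (hf i hi.1 hi.2).1
  · intro i hi j hj hij
    rw [Finset.mem_coe, Finset.mem_Icc] at hi hj
    by_contra hne
    rcases Nat.lt_or_ge i j with h | h
    · have h1 := hf i hi.1 hi.2
      have h2 := hf j hj.1 hj.2
      rw [← hij] at h2
      exact h1.2.2.2 (cl_down h1.2.1 (by omega) h h2.2.2.1)
    · have hji : j < i := by omega
      have h1 := hf j hj.1 hj.2
      have h2 := hf i hi.1 hi.2
      rw [hij] at h2
      exact h1.2.2.2 (cl_down h1.2.1 (by omega) hji h2.2.2.1)
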